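/- Deterministic Sampling Theorem: Let p be an aperiodic string of length m ≥ 2, and consider the ⌈m/2⌉ copies of p shifted by 0, 1, ..., ⌈m/2⌉-1 positions. Then there exists a copy index f and a set S of at most ⌈log₂⌈m/2⌉⌉ absolute positions, each covered by copy f, such that: for every text t, if copy f of p agrees with t on all positions in S, then every copy g ≠ f disagrees with t at some position covered by copy g. -/

import Mathlib

def Aperiodic {α : Type*} {m : ℕ} (p : Fin m → α) : Prop :=
  ∀ d, 1 ≤ d → d ≤ m / 2 → ∃ k, ∃ hk : k < m, d ≤ k ∧ p ⟨k, hk⟩ ≠ p ⟨k - d, by omega⟩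

private lemma ds_aux {α : Type*} (c m : ℕ) (q : ℕ → α)
    (hw : ∀ a b, a < b → b < c → ∃ k, b ≤ k ∧ k < a + m ∧ q (k - a) ≠ q (k - b)) :
    ∀ n (A : Finset ℕ), A.card = n → A.Nonempty → (∀ g ∈ A, g < c) →
    ∃ f ∈ A, ∃ S : Finset ℕ, S.card ≤ Nat.clog 2 n ∧ (∀ k ∈ S, f ≤ k ∧ k < f + m) ∧
      ∀ g ∈ A, g ≠ f → ∃ k ∈ S, g ≤ k ∧ k < g + m ∧ q (k - g) ≠ q (k - f) := by
  intro n
  induction n using Nat.strong_induction_on with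
  | _ n ih =>
    classical
    intro A hcard hne hAc
    rcases le_or_gt n 1 with h1 | h1
    · -- A is a singleton
      obtain ⟨f, hf⟩ := hne
      refine ⟨f, hf, ∅, by simp, by simp, ?_⟩
      intro g hg hgf
      exfalso
      have : A.card ≤ 1 := hcard ▸ h1
      rw [Finset.card_le_one] at this
      exact hgf (this g hg f hf)
    · -- at least two elements
      set a := A.min' hne with ha
      set b := A.max' hne with hb
      have hab : a < b := by
        apply A.min'_lt_max'_of_card
        omega
      obtain ⟨k, hbk, hkam, hqk⟩ := hw a b hab (hAc b (A.max'_mem hne))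
      -- every g ∈ A covers column k
      have hcov : ∀ g ∈ A, g ≤ k ∧ k < g + m := by
        intro g hg
        have h1 := A.min'_le g hg
        have h2 := A.le_max' g hg
        omega
      set B₁ := A.filter (fun g => q (k - g) = q (k - a)) with hB₁
      set B₂ := A.filter (fun g => ¬ q (k - g) = q (k - a)) with hB₂
      have haB₁ : a ∈ B₁ := by
        simp [hB₁, ha, A.min'_mem hne]
      have hbB₂ : b ∈ B₂ := by
        simp only [hB₂, Finset.mem_filter]
        exact ⟨A.max'_mem hne, fun h => hqk h.symm⟩
      have hsum : B₁.card + B₂.card = n := by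
        rw [hB₁, hB₂, Finset.card_filter_add_card_filter_not, hcard]
      -- pick the smaller class
      obtain ⟨B, hBsub, hBne, hBcard, hBdiff⟩ :
          ∃ B : Finset ℕ, B ⊆ A ∧ B.Nonempty ∧ B.card ≤ n / 2 ∧
            ∀ f ∈ B, ∀ g ∈ A, g ∉ B → q (k - g) ≠ q (k - f) := by
        rcases le_or_gt B₁.card B₂.card with hle | hle
        · refine ⟨B₁, Finset.filter_subset _ _, ⟨a, haB₁⟩, by omega, ?_⟩
          intro f hf g hg hgB
          simp only [hB₁, Finset.mem_filter] at hf
          have hg' : ¬ q (k - g) = q (k - a) := by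
            intro h; exact hgB (by simp [hB₁, hg, h])
          rw [hf.2]; exact hg'
        · refine ⟨B₂, Finset.filter_subset _ _, ⟨b, hbB₂⟩, by omega, ?_⟩
          intro f hf g hg hgB
          simp only [hB₂, Finset.mem_filter] at hf
          have hg' : q (k - g) = q (k - a) := by
            by_contra h; exact hgB (by simp [hB₂, hg, h])
          rw [hg']; exact fun h => hf.2 h.symm
      have hB2 : 0 < B.card := hBne.card_pos
      obtain ⟨f, hfB, S', hS'card, hS'cov, hS'elim⟩ :=
        ih B.card (by omega) B rfl hBne (fun g hg => hAc g (hBsub hg))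
      have hfA : f ∈ A := hBsub hfB
      refine ⟨f, hfA, insert k S', ?_, ?_, ?_⟩
      · calc (insert k S').card ≤ S'.card + 1 := Finset.card_insert_le _ _
          _ ≤ Nat.clog 2 (B.card) + 1 := by omega
          _ ≤ Nat.clog 2 ((n + 1) / 2) + 1 := by
              have : B.card ≤ (n + 1) / 2 := by omega
              exact add_le_add_left (Nat.clog_mono_right 2 this) 1
          _ = Nat.clog 2 n := (Nat.clog_of_two_le one_lt_two (by omega)).symm
      · intro k' hk'
        rcases Finset.mem_insert.mp hk' with rfl | hk'
        · exact hcov f hfA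
        · exact hS'cov k' hk'
      · intro g hg hgf
        by_cases hgB : g ∈ B
        · obtain ⟨k', hk', h1, h2, h3⟩ := hS'elim g hgB hgf
          exact ⟨k', Finset.mem_insert_of_mem hk', h1, h2, h3⟩
        · exact ⟨k, Finset.mem_insert_self _ _, (hcov g hg).1, (hcov g hg).2,
            hBdiff f hfB g hg hgB⟩

theorem deterministic_sampling {α : Type*} {m : ℕ} (hm : 2 ≤ m)
    (p : Fin m → α) (hap : Aperiodic p) :
    ∃ f < (m + 1) / 2, ∃ S : Finset ℕ,
      S.card ≤ Nat.clog 2 ((m + 1) / 2) ∧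
      (∀ k ∈ S, f ≤ k ∧ k < f + m) ∧
      ∀ t : ℕ → α,
        (∀ k ∈ S, ∀ h : k - f < m, t k = p ⟨k - f, h⟩) →
        ∀ g < (m + 1) / 2, g ≠ f →
          ∃ k, g ≤ k ∧ k < g + m ∧ ∃ h : k - g < m, t k ≠ p ⟨k - g, h⟩ := by
  set c := (m + 1) / 2 with hc
  set q : ℕ → α := fun j => if h : j < m then p ⟨j, h⟩ else p ⟨0, by omega⟩ with hq
  have hqp : ∀ j (h : j < m), q j = p ⟨j, h⟩ := fun j h => dif_pos h
  have hw : ∀ a b, a < b → b < c → ∃ k, b ≤ k ∧ k < a + m ∧ q (k - a) ≠ q (k - b) := by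
    intro a b hab hbc
    obtain ⟨k0, hk0, hdk0, hpk0⟩ := hap (b - a) (by omega) (by omega)
    refine ⟨a + k0, by omega, by omega, ?_⟩
    have h1 : a + k0 - a = k0 := by omega
    have h2 : a + k0 - b = k0 - (b - a) := by omega
    rw [h1, h2, hqp k0 hk0, hqp _ (by omega)]
    exact hpk0
  obtain ⟨f, hfA, S, hScard, hScov, hSelim⟩ :=
    ds_aux c m q hw c (Finset.range c) (Finset.card_range c) ⟨0, by simp [hc]; omega⟩
      (fun g hg => Finset.mem_range.mp hg)
  refine ⟨f, Finset.mem_range.mp hfA, S, hScard, hScov, ?_⟩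
  intro t ht g hgc hgf
  obtain ⟨k, hkS, h1, h2, h3⟩ := hSelim g (Finset.mem_range.mpr hgc) hgf
  have hkg : k - g < m := by omega
  refine ⟨k, h1, h2, hkg, ?_⟩
  have hkf : k - f < m := by have := hScov k hkS; omega
  rw [ht k hkS hkf, ← hqp (k - g) hkg, ← hqp (k - f) hkf]
  exact fun h => h3 h.symm
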